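/- arXiv:1310.5428 — 3 statements merged into one kernel-verified Lean document; each statement's English description precedes it below -/
import Mathlib

section
/- If a 2n × 2n complex matrix Ω is invertible and of Type-III (i.e., built from 2×2 blocks where the (m,m) diagonal block is t_m·I_2 and the (m,l) off-diagonal block for m < l is [[a_{ml}, b_{ml}],[-conj(b_{ml}), conj(a_{ml})]] with the (l,m) block being [[conj(a_{ml}), -b_{ml}],[conj(b_{ml}), a_{ml}]]), then Ω^{-1} is a Type-I matrix; in particular, all 2×2 diagonal blocks of Ω^{-1} are scalar multiples of the 2×2 identity matrix. -/
open Matrix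

/-- A `2n × 2n` complex matrix (indexed by `Fin n × Fin 2`) is of Type-I if every
`2×2` diagonal block is `t_m·I₂` and for `m < l` the `(m,l)` block `[[a,b],[c,d]]`
is paired with the `(l,m)` block `[[d,-b],[-c,a]]`. -/
def TypeI {n : ℕ} (M : Matrix (Fin n × Fin 2) (Fin n × Fin 2) ℂ) : Prop :=
  (∀ m : Fin n,
      M (m, 0) (m, 0) = M (m, 1) (m, 1) ∧
      M (m, 0) (m, 1) = 0 ∧ M (m, 1) (m, 0) = 0) ∧
    ∀ m l : Fin n, m < l →
      M (l, 0) (m, 0) = M (m, 1) (l, 1) ∧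
      M (l, 0) (m, 1) = -M (m, 0) (l, 1) ∧
      M (l, 1) (m, 0) = -M (m, 1) (l, 0) ∧
      M (l, 1) (m, 1) = M (m, 0) (l, 0)

/-- A `2n × 2n` complex matrix is of Type-III if every `2×2` diagonal block is
`t_m·I₂` and for `m < l` the `(m,l)` block is `[[a,b],[-conj b, conj a]]` with
`(l,m)` block `[[conj a, -b],[conj b, a]]`. -/
def TypeIII {n : ℕ} (M : Matrix (Fin n × Fin 2) (Fin n × Fin 2) ℂ) : Prop :=
  (∀ m : Fin n,
      M (m, 0) (m, 0) = M (m, 1) (m, 1) ∧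
      M (m, 0) (m, 1) = 0 ∧ M (m, 1) (m, 0) = 0) ∧
    ∀ m l : Fin n, m < l →
      M (m, 1) (l, 0) = -star (M (m, 0) (l, 1)) ∧
      M (m, 1) (l, 1) = star (M (m, 0) (l, 0)) ∧
      M (l, 0) (m, 0) = star (M (m, 0) (l, 0)) ∧
      M (l, 0) (m, 1) = -M (m, 0) (l, 1) ∧
      M (l, 1) (m, 0) = star (M (m, 0) (l, 1)) ∧
      M (l, 1) (m, 1) = M (m, 0) (l, 0)

def Jmat (n : ℕ) : Matrix (Fin n × Fin 2) (Fin n × Fin 2) ℂ :=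
  Matrix.of fun p q =>
    if p.1 = q.1 ∧ p.2 = 0 ∧ q.2 = 1 then 1
    else if p.1 = q.1 ∧ p.2 = 1 ∧ q.2 = 0 then -1 else 0

lemma mulJ {n : ℕ} (N : Matrix (Fin n × Fin 2) (Fin n × Fin 2) ℂ)
    (p : Fin n × Fin 2) (l : Fin n) :
    (N * Jmat n) p (l, 0) = -N p (l, 1) ∧ (N * Jmat n) p (l, 1) = N p (l, 0) := by
  constructor <;>
  · simp [Jmat, mul_apply, Fintype.sum_prod_type, Fin.sum_univ_two,
      mul_ite, Finset.sum_ite_eq']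

lemma Jmul {n : ℕ} (N : Matrix (Fin n × Fin 2) (Fin n × Fin 2) ℂ)
    (m : Fin n) (q : Fin n × Fin 2) :
    (Jmat n * N) (m, 0) q = N (m, 1) q ∧ (Jmat n * N) (m, 1) q = -N (m, 0) q := by
  constructor <;>
  · simp [Jmat, mul_apply, Fintype.sum_prod_type, Fin.sum_univ_two,
      ite_mul, Finset.sum_ite_eq]

lemma typeIII_selfdual {n : ℕ} (M : Matrix (Fin n × Fin 2) (Fin n × Fin 2) ℂ)
    (hM : TypeIII M) : M * Jmat n = Jmat n * Mᵀ := by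
  ext ⟨m, a⟩ ⟨l, b⟩
  rcases lt_trichotomy m l with h | h | h
  · obtain ⟨h1, h2, h3, h4, h5, h6⟩ := hM.2 m l h
    fin_cases a <;> fin_cases b <;>
      simp [(mulJ M _ _).1, (mulJ M _ _).2, (Jmul Mᵀ _ _).1, (Jmul Mᵀ _ _).2,
        transpose_apply, h1, h2, h3, h4, h5, h6]
  · subst h
    obtain ⟨h1, h2, h3⟩ := hM.1 m
    fin_cases a <;> fin_cases b <;>
      simp [(mulJ M _ _).1, (mulJ M _ _).2, (Jmul Mᵀ _ _).1, (Jmul Mᵀ _ _).2,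
        transpose_apply, h1, h2, h3]
  · obtain ⟨h1, h2, h3, h4, h5, h6⟩ := hM.2 l m h
    fin_cases a <;> fin_cases b <;>
      simp [(mulJ M _ _).1, (mulJ M _ _).2, (Jmul Mᵀ _ _).1, (Jmul Mᵀ _ _).2,
        transpose_apply, h1, h2, h3, h4, h5, h6]

/-- The inverse of an invertible Type-III matrix is a Type-I matrix; in particular
all `2×2` diagonal blocks of the inverse are scalar multiples of `I₂`. -/
theorem inv_typeIII_is_typeI {n : ℕ}
    (M : Matrix (Fin n × Fin 2) (Fin n × Fin 2) ℂ)
    (hM : TypeIII M) (hinv : IsUnit M.det) :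
    TypeI M⁻¹ ∧
      ∀ m : Fin n, ∃ t : ℂ,
        (fun i j : Fin 2 => M⁻¹ (m, i) (m, j)) = t • (1 : Matrix (Fin 2) (Fin 2) ℂ) := by
  have ht : IsUnit Mᵀ.det := by rwa [det_transpose]
  have hJ : M * Jmat n = Jmat n * Mᵀ := typeIII_selfdual M hM
  set N := M⁻¹ with hNdef
  have hN : N * Jmat n = Jmat n * Nᵀ := by
    have : N * Jmat n = N * ((Jmat n * Mᵀ) * (Mᵀ)⁻¹) := by
      rw [mul_assoc (Jmat n), mul_nonsing_inv _ ht, mul_one]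
    rw [this, ← hJ, ← mul_assoc, ← mul_assoc, nonsing_inv_mul _ hinv, one_mul,
      ]
    rw [hNdef, Matrix.transpose_nonsing_inv]
  -- entrywise consequences
  have E : ∀ m l : Fin n,
      (-N (m,0) (l,1) = N (l,0) (m,1)) ∧ (N (m,0) (l,0) = N (l,1) (m,1)) ∧
      (-N (m,1) (l,1) = -N (l,0) (m,0)) ∧ (N (m,1) (l,0) = -N (l,1) (m,0)) := by
    intro m l
    have e00 := congrFun (congrFun hN (m,0)) (l,0)
    have e01 := congrFun (congrFun hN (m,0)) (l,1)
    have e10 := congrFun (congrFun hN (m,1)) (l,0)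
    have e11 := congrFun (congrFun hN (m,1)) (l,1)
    rw [(mulJ N _ _).1, (Jmul Nᵀ _ _).1] at e00
    rw [(mulJ N _ _).2, (Jmul Nᵀ _ _).1] at e01
    rw [(mulJ N _ _).1, (Jmul Nᵀ _ _).2] at e10
    rw [(mulJ N _ _).2, (Jmul Nᵀ _ _).2] at e11
    simp only [transpose_apply] at e00 e01 e10 e11
    exact ⟨e00, e01, e10, e11⟩
  have hTypeI : TypeI N := by
    constructor
    · intro m
      obtain ⟨e00, e01, e10, e11⟩ := E m m
      refine ⟨by linear_combination e10, ?_, ?_⟩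
      · linear_combination (-(1:ℂ)/2) * e00
      · linear_combination ((1:ℂ)/2) * e11
    · intro m l _
      obtain ⟨e00, e01, e10, e11⟩ := E m l
      exact ⟨by linear_combination e10, by linear_combination -e00,
        by linear_combination e11, e01.symm⟩
  refine ⟨hTypeI, fun m => ⟨N (m,0) (m,0), ?_⟩⟩
  obtain ⟨d1, d2, d3⟩ := hTypeI.1 m
  ext i j
  fin_cases i <;> fin_cases j <;>
    simp [Matrix.smul_apply, Matrix.one_apply, d1, d2, d3]
end

section
/- Let u_1, …, u_K be independent nonnegative random variables each bounded by 2η²n with E u_h ≤ 2 and define W = (1/(np)) Σ_{h=1}^K u_h. Then for every positive integer m, E W^m ≤ C(6K/(np) + 2η²m/p)^m for an absolute constant C; consequently, if K = o(np) and η = η_n → 0, choosing m = ⌊log p⌋ gives E W^m = o(p^{-t}) for any fixed t > 0. -/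
open MeasureTheory ProbabilityTheory Filter

set_option maxHeartbeats 1000000 in

lemma aux_moment {Ω : Type} {m0 : MeasurableSpace Ω} (μ : Measure Ω)
    [IsProbabilityMeasure μ] {K : ℕ} {B : ℝ} (hB : 0 ≤ B) (u : Fin K → Ω → ℝ)
    (hmeas : ∀ h, Measurable (u h))
    (hindep : iIndepFun u μ)
    (hbound : ∀ h ω, 0 ≤ u h ω ∧ u h ω ≤ B)
    (hmean : ∀ h, ∫ ω, u h ω ∂μ ≤ 2) (m : ℕ) :
    ∫ ω, (∑ h, u h ω) ^ m ∂μ ≤ (6 * K + B * m) ^ m := by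
  have hSmeas : Measurable (fun ω => ∑ h, u h ω) :=
    Finset.measurable_sum _ (fun h _ => hmeas h)
  have hS0 : ∀ ω, 0 ≤ ∑ h, u h ω := fun ω => Finset.sum_nonneg fun h _ => (hbound h ω).1
  have hSB : ∀ ω, ∑ h, u h ω ≤ K * B := fun ω => by
    calc ∑ h, u h ω ≤ ∑ _h : Fin K, B := Finset.sum_le_sum fun h _ => (hbound h ω).2
      _ = K * B := by simp [mul_comm]
  have integ : ∀ (g : Ω → ℝ) (C : ℝ), Measurable g → (∀ ω, 0 ≤ g ω) → (∀ ω, g ω ≤ C) →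
      Integrable g μ := fun g C hg h0 h1 =>
    ⟨hg.aestronglyMeasurable, HasFiniteIntegral.of_bounded (C := C) (ae_of_all μ fun ω => by
      rw [Real.norm_eq_abs, abs_of_nonneg (h0 ω)]; exact h1 ω)⟩
  have hint : ∀ j : ℕ, Integrable (fun ω => (∑ h, u h ω) ^ j) μ := fun j =>
    integ _ ((K * B) ^ j) (hSmeas.pow_const j) (fun ω => pow_nonneg (hS0 ω) j)
      (fun ω => pow_le_pow_left₀ (hS0 ω) (hSB ω) j)
  induction m using Nat.strong_induction_on with
  | _ M IH =>
  match M with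
  | 0 => simp
  | (N + 1) =>
    rcases Nat.eq_zero_or_pos K with rfl | hK
    · have h0 : ∀ ω, (∑ h : Fin 0, u h ω) = 0 := fun ω => by simp
      simp only [h0]
      rw [zero_pow (Nat.succ_ne_zero N)]
      simp only [integral_zero]
      positivity
    have hKpos : (0:ℝ) < K := by exact_mod_cast hK
    set a : ℝ := 6 * K + B * (N + 1) with ha_def
    have ha6 : (6:ℝ) * K ≤ a := le_add_of_nonneg_right (by positivity)
    have haB : B * ((N:ℝ) + 1) ≤ a := by
      rw [ha_def]; push_cast; nlinarith
    have ha : 0 < a := lt_of_lt_of_le (by positivity) ha6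
    -- step: per-h bound
    have step : ∀ h : Fin K, ∫ ω, (∑ h', u h' ω) ^ N * u h ω ∂μ ≤
        2 * ∫ ω, ((∑ h', u h' ω) + B) ^ N ∂μ := by
      intro h
      have hTmeas : Measurable (fun ω => ∑ h' ∈ Finset.univ.erase h, u h' ω) :=
        Finset.measurable_sum _ fun h' _ => hmeas h'
      have hT0 : ∀ ω, 0 ≤ ∑ h' ∈ Finset.univ.erase h, u h' ω :=
        fun ω => Finset.sum_nonneg fun h' _ => (hbound h' ω).1
      have hTS : ∀ ω, (∑ h' ∈ Finset.univ.erase h, u h' ω) + u h ω = ∑ h', u h' ω :=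
        fun ω => Finset.sum_erase_add _ _ (Finset.mem_univ h)
      have hTleS : ∀ ω, (∑ h' ∈ Finset.univ.erase h, u h' ω) ≤ ∑ h', u h' ω := fun ω => by
        have h1 := hTS ω; have h2 := (hbound h ω).1; linarith
      have hTB : ∀ ω, (∑ h' ∈ Finset.univ.erase h, u h' ω) ≤ K * B :=
        fun ω => le_trans (hTleS ω) (hSB ω)
      have hpt : ∀ ω, (∑ h', u h' ω) ^ N * u h ω ≤
          ((∑ h' ∈ Finset.univ.erase h, u h' ω) + B) ^ N * u h ω := fun ω => by
        refine mul_le_mul_of_nonneg_right ?_ (hbound h ω).1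
        refine pow_le_pow_left₀ (hS0 ω) ?_ N
        rw [← hTS ω]
        exact add_le_add_right (hbound h ω).2 _
      have hTu : IndepFun (fun ω => ((∑ h' ∈ Finset.univ.erase h, u h' ω) + B) ^ N) (u h) μ := by
        have h1 : IndepFun (∑ h' ∈ Finset.univ.erase h, u h') (u h) μ :=
          hindep.indepFun_finsetSum_of_notMem hmeas (Finset.notMem_erase h _)
        have h2 := h1.comp (φ := fun x : ℝ => (x + B) ^ N) (ψ := id)
          ((measurable_id.add_const B).pow_const N) measurable_id
        have h3 : ((fun x : ℝ => (x + B) ^ N) ∘ (∑ h' ∈ Finset.univ.erase h, u h')) =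
            fun ω => ((∑ h' ∈ Finset.univ.erase h, u h' ω) + B) ^ N := by
          funext ω; simp [Function.comp, Finset.sum_apply]
        rwa [h3] at h2
      have hmul : ∫ ω, ((∑ h' ∈ Finset.univ.erase h, u h' ω) + B) ^ N * u h ω ∂μ =
          (∫ ω, ((∑ h' ∈ Finset.univ.erase h, u h' ω) + B) ^ N ∂μ) * ∫ ω, u h ω ∂μ :=
        hTu.integral_mul_eq_mul_integral ((hTmeas.add_const B).pow_const N).aestronglyMeasurable
          (hmeas h).aestronglyMeasurable
      have int1 : Integrable (fun ω => (∑ h', u h' ω) ^ N * u h ω) μ :=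
        integ _ ((K * B) ^ N * B) ((hSmeas.pow_const N).mul (hmeas h))
          (fun ω => mul_nonneg (pow_nonneg (hS0 ω) N) (hbound h ω).1)
          (fun ω => mul_le_mul (pow_le_pow_left₀ (hS0 ω) (hSB ω) N) (hbound h ω).2
            (hbound h ω).1 (by positivity))
      have int2 : Integrable
          (fun ω => ((∑ h' ∈ Finset.univ.erase h, u h' ω) + B) ^ N * u h ω) μ :=
        integ _ ((K * B + B) ^ N * B) (((hTmeas.add_const B).pow_const N).mul (hmeas h))
          (fun ω => mul_nonneg (pow_nonneg (by linarith [hT0 ω]) N) (hbound h ω).1)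
          (fun ω => mul_le_mul (pow_le_pow_left₀ (by linarith [hT0 ω])
            (by linarith [hTB ω]) N) (hbound h ω).2 (hbound h ω).1 (by positivity))
      have int3 : Integrable (fun ω => ((∑ h' ∈ Finset.univ.erase h, u h' ω) + B) ^ N) μ :=
        integ _ ((K * B + B) ^ N) ((hTmeas.add_const B).pow_const N)
          (fun ω => pow_nonneg (by linarith [hT0 ω]) N)
          (fun ω => pow_le_pow_left₀ (by linarith [hT0 ω]) (by linarith [hTB ω]) N)
      have int4 : Integrable (fun ω => ((∑ h', u h' ω) + B) ^ N) μ :=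
        integ _ ((K * B + B) ^ N) ((hSmeas.add_const B).pow_const N)
          (fun ω => pow_nonneg (by linarith [hS0 ω]) N)
          (fun ω => pow_le_pow_left₀ (by linarith [hS0 ω]) (by linarith [hSB ω]) N)
      calc ∫ ω, (∑ h', u h' ω) ^ N * u h ω ∂μ
          ≤ ∫ ω, ((∑ h' ∈ Finset.univ.erase h, u h' ω) + B) ^ N * u h ω ∂μ :=
            integral_mono int1 int2 hpt
        _ = (∫ ω, ((∑ h' ∈ Finset.univ.erase h, u h' ω) + B) ^ N ∂μ) * ∫ ω, u h ω ∂μ := hmul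
        _ ≤ (∫ ω, ((∑ h' ∈ Finset.univ.erase h, u h' ω) + B) ^ N ∂μ) * 2 := by
            refine mul_le_mul_of_nonneg_left (hmean h) ?_
            exact integral_nonneg fun ω => pow_nonneg (by linarith [hT0 ω]) N
        _ = 2 * ∫ ω, ((∑ h' ∈ Finset.univ.erase h, u h' ω) + B) ^ N ∂μ := mul_comm _ _
        _ ≤ 2 * ∫ ω, ((∑ h', u h' ω) + B) ^ N ∂μ := by
            refine mul_le_mul_of_nonneg_left (integral_mono int3 int4 fun ω => ?_) (by norm_num)
            exact pow_le_pow_left₀ (by linarith [hT0 ω]) (by linarith [hTleS ω]) N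
    -- binomial bound
    have binm : ∫ ω, ((∑ h, u h ω) + B) ^ N ∂μ ≤ (a + B) ^ N := by
      have expand : ∀ ω, ((∑ h, u h ω) + B) ^ N =
          ∑ j ∈ Finset.range (N + 1), (∑ h, u h ω) ^ j * B ^ (N - j) * (N.choose j) :=
        fun ω => add_pow _ _ _
      calc ∫ ω, ((∑ h, u h ω) + B) ^ N ∂μ
          = ∑ j ∈ Finset.range (N + 1), (∫ ω, (∑ h, u h ω) ^ j ∂μ) * B ^ (N - j) *
              (N.choose j) := by
            simp_rw [expand]
            rw [integral_finset_sum _ (fun j _ => ((hint j).mul_const _).mul_const _)]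
            simp_rw [integral_mul_const]
        _ ≤ ∑ j ∈ Finset.range (N + 1), a ^ j * B ^ (N - j) * (N.choose j) := by
            refine Finset.sum_le_sum fun j hj => ?_
            refine mul_le_mul_of_nonneg_right (mul_le_mul_of_nonneg_right ?_
              (by positivity)) (by positivity)
            have hjN : j < N + 1 := Finset.mem_range.mp hj
            refine le_trans (IH j hjN) ?_
            refine pow_le_pow_left₀ (by positivity) ?_ j
            rw [ha_def]
            have : (j:ℝ) ≤ (N:ℝ) + 1 := by exact_mod_cast hjN.le
            nlinarith
        _ = (a + B) ^ N := (add_pow _ _ _).symm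
    -- assemble
    have split : ∫ ω, (∑ h, u h ω) ^ (N + 1) ∂μ =
        ∑ h : Fin K, ∫ ω, (∑ h', u h' ω) ^ N * u h ω ∂μ := by
      rw [← integral_finset_sum]
      · refine integral_congr_ae (ae_of_all μ fun ω => ?_)
        show (∑ h, u h ω) ^ (N + 1) = ∑ i : Fin K, (∑ h', u h' ω) ^ N * u i ω
        rw [pow_succ, Finset.mul_sum]
      · intro h _
        exact integ _ ((K * B) ^ N * B) ((hSmeas.pow_const N).mul (hmeas h))
          (fun ω => mul_nonneg (pow_nonneg (hS0 ω) N) (hbound h ω).1)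
          (fun ω => mul_le_mul (pow_le_pow_left₀ (hS0 ω) (hSB ω) N) (hbound h ω).2
            (hbound h ω).1 (by positivity))
    have key : (K:ℝ) * (2 * (a + B) ^ N) ≤ a ^ (N + 1) := by
      have h1 : a + B ≤ a * Real.exp (B / a) := by
        have h0 : 1 + B / a ≤ Real.exp (B / a) := by
          have := Real.add_one_le_exp (B / a); linarith
        calc a + B = a * (1 + B / a) := by field_simp
          _ ≤ a * Real.exp (B / a) := mul_le_mul_of_nonneg_left h0 ha.le
      have h2 : (a + B) ^ N ≤ a ^ N * Real.exp ((N:ℝ) * (B / a)) := by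
        calc (a + B) ^ N ≤ (a * Real.exp (B / a)) ^ N :=
              pow_le_pow_left₀ (by positivity) h1 N
          _ = a ^ N * Real.exp (B / a) ^ N := mul_pow _ _ _
          _ = a ^ N * Real.exp ((N:ℝ) * (B / a)) := by rw [← Real.exp_nat_mul]
      have h3 : (N:ℝ) * (B / a) ≤ 1 := by
        rw [mul_div_assoc']
        rw [div_le_one ha]
        nlinarith [haB]
      have h4 : Real.exp ((N:ℝ) * (B / a)) ≤ 3 := by
        refine le_trans (Real.exp_le_exp.2 h3) ?_
        have := Real.exp_one_lt_d9; linarith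
      have h5 : (a + B) ^ N ≤ a ^ N * 3 :=
        le_trans h2 (mul_le_mul_of_nonneg_left h4 (by positivity))
      calc (K:ℝ) * (2 * (a + B) ^ N) ≤ (K:ℝ) * (2 * (a ^ N * 3)) := by
            refine mul_le_mul_of_nonneg_left (mul_le_mul_of_nonneg_left h5 (by norm_num))
              hKpos.le
        _ = 6 * K * a ^ N := by ring
        _ ≤ a * a ^ N := mul_le_mul_of_nonneg_right ha6 (by positivity)
        _ = a ^ (N + 1) := by ring
    calc ∫ ω, (∑ h, u h ω) ^ (N + 1) ∂μ
        = ∑ h : Fin K, ∫ ω, (∑ h', u h' ω) ^ N * u h ω ∂μ := split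
      _ ≤ ∑ _h : Fin K, 2 * ∫ ω, ((∑ h', u h' ω) + B) ^ N ∂μ :=
          Finset.sum_le_sum fun h _ => step h
      _ = (K:ℝ) * (2 * ∫ ω, ((∑ h', u h' ω) + B) ^ N ∂μ) := by
          simp [Finset.sum_const, mul_comm]
      _ ≤ (K:ℝ) * (2 * (a + B) ^ N) := by
          refine mul_le_mul_of_nonneg_left (mul_le_mul_of_nonneg_left binm (by norm_num))
            hKpos.le
      _ ≤ a ^ (N + 1) := key
      _ = (6 * (K:ℝ) + B * ((N:ℕ) + 1 : ℕ)) ^ (N + 1) := by rw [ha_def]; norm_cast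

set_option maxHeartbeats 1000000 in
/-- Multinomial moment bound: for independent nonnegative `u_h ≤ 2η²n` with
`E u_h ≤ 2` and `W = (1/(np)) Σ_h u_h`, one has
`E W^m ≤ C (6K/(np) + 2η²m/p)^m` for an absolute constant `C`; consequently if
`K = o(np)` and `η = η_n → 0`, taking `m = ⌊log p⌋` gives `E W^m = o(p^{-t})` for
every fixed `t > 0`. -/
theorem multinomial_moment_bound :
    ∃ C : ℝ, 0 < C ∧
      ((∀ (Ω : Type) (m0 : MeasurableSpace Ω) (μ : Measure Ω),
          IsProbabilityMeasure μ →
          ∀ (K n p : ℕ) (η : ℝ) (u : Fin K → Ω → ℝ),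
            0 < n → 0 < p → 0 < η →
            (∀ h, Measurable (u h)) →
            iIndepFun u μ →
            (∀ h ω, 0 ≤ u h ω ∧ u h ω ≤ 2 * η ^ 2 * n) →
            (∀ h, ∫ ω, u h ω ∂μ ≤ 2) →
            ∀ m : ℕ, 0 < m →
              ∫ ω, (((n : ℝ) * p)⁻¹ * ∑ h, u h ω) ^ m ∂μ ≤
                C * (6 * K / ((n : ℝ) * p) + 2 * η ^ 2 * m / p) ^ m) ∧
        ∀ (Ω : ℕ → Type) (m0 : ∀ i, MeasurableSpace (Ω i))
          (μ : ∀ i, Measure (Ω i)), (∀ i, IsProbabilityMeasure (μ i)) →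
          ∀ (K n p : ℕ → ℕ) (η : ℕ → ℝ)
            (u : ∀ i : ℕ, Fin (K i) → Ω i → ℝ),
            (∀ i, 0 < n i) → (∀ i, 0 < p i) → (∀ i, 0 < η i) →
            (∀ i h, Measurable (u i h)) →
            (∀ i, iIndepFun (u i) (μ i)) →
            (∀ i h ω, 0 ≤ u i h ω ∧ u i h ω ≤ 2 * η i ^ 2 * n i) →
            (∀ i h, ∫ ω, u i h ω ∂(μ i) ≤ 2) →
            Tendsto (fun i => (K i : ℝ) / ((n i : ℝ) * p i)) atTop (nhds 0) →
            Tendsto η atTop (nhds 0) →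
            Tendsto (fun i => (p i : ℝ)) atTop atTop →
            ∀ t : ℝ, 0 < t →
              Tendsto
                (fun i =>
                  (∫ ω, (((n i : ℝ) * p i)⁻¹ * ∑ h, u i h ω) ^
                      (⌊Real.log (p i)⌋₊) ∂(μ i)) * (p i : ℝ) ^ t)
                atTop (nhds 0)) := by
  have part1 : ∀ (Ω : Type) (m0 : MeasurableSpace Ω) (μ : Measure Ω),
      IsProbabilityMeasure μ →
      ∀ (K n p : ℕ) (η : ℝ) (u : Fin K → Ω → ℝ),
        0 < n → 0 < p → 0 < η →
        (∀ h, Measurable (u h)) →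
        iIndepFun u μ →
        (∀ h ω, 0 ≤ u h ω ∧ u h ω ≤ 2 * η ^ 2 * n) →
        (∀ h, ∫ ω, u h ω ∂μ ≤ 2) →
        ∀ m : ℕ,
          ∫ ω, (((n : ℝ) * p)⁻¹ * ∑ h, u h ω) ^ m ∂μ ≤
            (6 * K / ((n : ℝ) * p) + 2 * η ^ 2 * m / p) ^ m := by
    intro Ω m0 μ hprob K n p η u hn hp hη hmeas hindep hbound hmean m
    have key := aux_moment μ (B := 2 * η ^ 2 * n) (by positivity) u hmeas hindep hbound hmean m
    have h1 : (0:ℝ) < n := by exact_mod_cast hn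
    have h2 : (0:ℝ) < p := by exact_mod_cast hp
    have heq : ∫ ω, (((n : ℝ) * p)⁻¹ * ∑ h, u h ω) ^ m ∂μ =
        (((n : ℝ) * p)⁻¹) ^ m * ∫ ω, (∑ h, u h ω) ^ m ∂μ := by
      simp_rw [mul_pow]
      rw [integral_const_mul]
    have hrhs : 6 * (K:ℝ) / ((n : ℝ) * p) + 2 * η ^ 2 * m / p =
        ((n : ℝ) * p)⁻¹ * (6 * K + 2 * η ^ 2 * n * m) := by
      field_simp
    rw [heq, hrhs, mul_pow]
    exact mul_le_mul_of_nonneg_left key (by positivity)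
  refine ⟨1, one_pos, ?_, ?_⟩
  · intro Ω m0 μ hprob K n p η u hn hp hη hmeas hindep hbound hmean m _
    rw [one_mul]
    exact part1 Ω m0 μ hprob K n p η u hn hp hη hmeas hindep hbound hmean m
  · intro Ω m0 μ hprob K n p η u hn hp hη hmeas hindep hbound hmean hKnp hηz hpz t ht
    set E : ℕ → ℝ := fun i =>
      ∫ ω, (((n i : ℝ) * p i)⁻¹ * ∑ h, u i h ω) ^ (⌊Real.log (p i)⌋₊) ∂(μ i) with hE
    set ε : ℕ → ℝ := fun i =>
      6 * (K i : ℝ) / ((n i : ℝ) * p i) +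
        2 * η i ^ 2 * (⌊Real.log (p i)⌋₊ : ℝ) / p i with hεdef
    have hps : ∀ i, (0:ℝ) < p i := fun i => by exact_mod_cast hp i
    have hns : ∀ i, (0:ℝ) < n i := fun i => by exact_mod_cast hn i
    have hε0 : ∀ i, 0 ≤ ε i := fun i => by
      have := hps i; have := hns i; positivity
    have hE0 : ∀ i, 0 ≤ E i := fun i => by
      refine integral_nonneg fun ω => ?_
      refine pow_nonneg (mul_nonneg (inv_nonneg.2 ?_) ?_) _
      · positivity
      · exact Finset.sum_nonneg fun h _ => (hbound i h ω).1
    have hEε : ∀ i, E i ≤ ε i ^ (⌊Real.log (p i)⌋₊) := fun i =>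
      part1 (Ω i) (m0 i) (μ i) (hprob i) (K i) (n i) (p i) (η i) (u i) (hn i) (hp i)
        (hη i) (hmeas i) (hindep i) (hbound i) (hmean i) _
    -- epsilon tends to zero
    have hεlim : Tendsto ε atTop (nhds 0) := by
      have t1 : Tendsto (fun i => 6 * (K i : ℝ) / ((n i : ℝ) * p i)) atTop (nhds 0) := by
        have := hKnp.const_mul (6:ℝ)
        simp only [mul_zero] at this
        convert this using 2 with i
        ring
      have t2 : Tendsto (fun i => 2 * η i ^ 2 * (⌊Real.log (p i)⌋₊ : ℝ) / p i) atTop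
          (nhds 0) := by
        refine squeeze_zero' (g := fun i => 2 * η i ^ 2) (Eventually.of_forall fun i => by have := hps i; positivity)
          (Eventually.of_forall fun i => ?_) ?_
        · show 2 * η i ^ 2 * (⌊Real.log (p i)⌋₊ : ℝ) / p i ≤ 2 * η i ^ 2
          have hm : ((⌊Real.log (p i)⌋₊ : ℝ)) ≤ (p i : ℝ) := by
            rcases le_or_gt (Real.log (p i)) 0 with hl | hl
            · rw [Nat.floor_eq_zero.2 (by exact_mod_cast lt_of_le_of_lt hl one_pos)]
              · exact_mod_cast (hps i).le
            · calc ((⌊Real.log (p i)⌋₊ : ℝ)) ≤ Real.log (p i) := Nat.floor_le hl.le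
                _ ≤ (p i : ℝ) - 1 := Real.log_le_sub_one_of_pos (hps i)
                _ ≤ (p i : ℝ) := by linarith
          rw [div_le_iff₀ (hps i)]
          nlinarith [sq_nonneg (η i), hps i]
        · have := (hηz.mul hηz).const_mul (2:ℝ)
          simp only [mul_zero, zero_mul] at this
          convert this using 2 with i
          ring
      have := t1.add t2
      simp only [add_zero] at this
      exact this
    -- the squeeze
    set δ : ℝ := Real.exp (-(t + 1)) with hδdef
    have hδpos : 0 < δ := Real.exp_pos _
    have hev1 : ∀ᶠ i in atTop, ε i < δ := hεlim.eventually (gt_mem_nhds hδpos)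
    have hev2 : ∀ᶠ i in atTop, (3:ℝ) ≤ (p i : ℝ) := hpz.eventually_ge_atTop 3
    have hg : Tendsto (fun i => Real.exp (t + 1) * ((p i : ℝ))⁻¹) atTop (nhds 0) := by
      have := (tendsto_inv_atTop_zero.comp hpz).const_mul (Real.exp (t + 1))
      simp only [mul_zero] at this
      exact this
    refine squeeze_zero' (Eventually.of_forall fun i =>
        mul_nonneg (hE0 i) (Real.rpow_nonneg (hps i).le t)) ?_ hg
    filter_upwards [hev1, hev2] with i h1 h2
    set P : ℝ := (p i : ℝ) with hPdef
    have hP0 : 0 < P := hps i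
    set m : ℕ := ⌊Real.log (p i)⌋₊ with hmdef
    have hlogfloor : Real.log P - 1 < (m : ℝ) := Nat.sub_one_lt_floor _
    have hPt : 0 ≤ P ^ t := Real.rpow_nonneg hP0.le t
    have step1 : E i * P ^ t ≤ δ ^ m * P ^ t := by
      refine mul_le_mul_of_nonneg_right (le_trans (hEε i) ?_) hPt
      exact pow_le_pow_left₀ (hε0 i) h1.le m
    refine le_trans step1 ?_
    have step2 : δ ^ m ≤ Real.exp (t + 1) * P ^ (-(t + 1)) := by
      rw [hδdef, ← Real.exp_nat_mul]
      rw [Real.rpow_def_of_pos hP0, ← Real.exp_add]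
      refine Real.exp_le_exp.2 ?_
      have ht1 : (0:ℝ) < t + 1 := by linarith
      nlinarith [hlogfloor]
    calc δ ^ m * P ^ t ≤ (Real.exp (t + 1) * P ^ (-(t + 1))) * P ^ t :=
          mul_le_mul_of_nonneg_right step2 hPt
      _ = Real.exp (t + 1) * (P ^ (-(t + 1)) * P ^ t) := by ring
      _ = Real.exp (t + 1) * P ^ (-(t + 1) + t) := by rw [← Real.rpow_add hP0]
      _ = Real.exp (t + 1) * P⁻¹ := by
          norm_num
          rw [Real.rpow_neg_one]
end

section
/- Fix y ∈ (0,∞) and z ∈ ℂ⁺. The function m(z) = (1 - y - z + √((1 - z - y)² - 4yz)) / (2yz), with the branch of the square root chosen to have positive imaginary part, is the unique solution in ℂ⁺ of the equation m = 1/(1 - z - y - yzm). -/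
open Complex

lemma mp_aux_im (y : ℝ) (hy : 0 < y) (z : ℂ) (hz : 0 < z.im)
    (s : ℂ) (hs : s ^ 2 = (1 - z - y) ^ 2 - 4 * y * z) (hsim : 0 < s.im) :
    z.im < s.im := by
  have h2 : s ^ 2 = (z - (1 + y)) ^ 2 - 4 * y := by rw [hs]; ring
  have hre := congrArg Complex.re h2
  have him := congrArg Complex.im h2
  simp [pow_two, Complex.mul_re, Complex.mul_im, Complex.sub_re, Complex.sub_im,
    Complex.add_re, Complex.add_im, Complex.ofReal_re, Complex.ofReal_im] at hre him
  set σ := s.re; set τ := s.im; set q := z.im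
  set p := z.re - (1 + y) with hp
  -- hre : σ*σ - τ*τ = p*p - q*q - 4*y (roughly), him : σ*τ + τ*σ = ...
  by_contra hc
  push_neg at hc
  have h1 : σ * τ = p * q := by linarith
  have h1sq : σ^2 * τ^2 = p^2 * q^2 := by
    calc σ^2 * τ^2 = (σ*τ)^2 := by ring
    _ = (p*q)^2 := by rw [h1]
    _ = p^2*q^2 := by ring
  nlinarith [h1sq, hre, sq_nonneg σ, mul_pos hz hz, mul_pos hy (mul_pos hz hz),
    mul_nonneg (mul_nonneg (sub_nonneg.2 hc) (le_of_lt (add_pos hsim hz))) (add_nonneg (sq_nonneg σ) (le_of_lt (mul_pos hz hz)))]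

/-- The value `m(z) = (1 - y - z + √((1-z-y)² - 4yz))/(2yz)`, with the square-root
branch of positive imaginary part, is the unique solution in `ℂ⁺` of
`m = 1/(1 - z - y - yzm)`. -/
theorem mp_fixed_point_unique (y : ℝ) (hy : 0 < y) (z : ℂ) (hz : 0 < z.im)
    (s : ℂ) (hs : s ^ 2 = (1 - z - y) ^ 2 - 4 * y * z) (hsim : 0 < s.im) :
    0 < ((1 - y - z + s) / (2 * y * z)).im ∧
      (1 - y - z + s) / (2 * y * z) =
        (1 - z - y - y * z * ((1 - y - z + s) / (2 * y * z)))⁻¹ ∧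
      ∀ w : ℂ, 0 < w.im → w = (1 - z - y - y * z * w)⁻¹ →
        w = (1 - y - z + s) / (2 * y * z) := by
  have hsz : z.im < s.im := mp_aux_im y hy z hz s hs hsim
  have hyC : (y : ℂ) ≠ 0 := by exact_mod_cast hy.ne'
  have hzC : z ≠ 0 := by intro h; rw [h] at hz; simp at hz
  set m : ℂ := (1 - y - z + s) / (2 * y * z) with hm
  have hm1 : m * ((1 - y - z - s) / 2) = 1 := by
    rw [hm]; field_simp; linear_combination -hs
  have hm0 : m ≠ 0 := left_ne_zero_of_mul_eq_one hm1
  have hminv : m⁻¹ = (1 - y - z - s) / 2 := inv_eq_of_mul_eq_one_right hm1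
  have hinvim : (m⁻¹).im = (-z.im - s.im) / 2 := by
    rw [hminv]; simp [Complex.div_im, Complex.sub_im, Complex.ofReal_im]
  have hmim : 0 < m.im := by
    have h1 : (m⁻¹).im < 0 := by rw [hinvim]; linarith
    have h2 := Complex.inv_im m
    have h3 : 0 < Complex.normSq m := Complex.normSq_pos.2 hm0
    rw [h2] at h1
    have := (div_neg_iff.1 h1)
    rcases this with ⟨ha, _⟩ | ⟨_, hb⟩
    · linarith
    · linarith
  refine ⟨hmim, ?_, ?_⟩
  · have hyzm : (y : ℂ) * z * m = (1 - y - z + s) / 2 := by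
      rw [hm]; field_simp
    rw [hyzm]
    have he : 1 - z - (y:ℂ) - (1 - y - z + s) / 2 = m⁻¹ := by
      rw [hminv]; ring
    rw [he, inv_inv]
  · intro w hw hwe
    have hD : 1 - z - (y:ℂ) - y * z * w ≠ 0 := by
      intro h; rw [h, inv_zero] at hwe; rw [hwe] at hw; simp at hw
    have hq : w * (1 - z - (y:ℂ) - y * z * w) = 1 := by
      nth_rewrite 1 [hwe]; exact inv_mul_cancel₀ hD
    have hsq : (2 * y * z * w - (1 - y - z) - s) * (2 * y * z * w - (1 - y - z) + s) = 0 := by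
      linear_combination (-4 * (y:ℂ) * z) * hq - hs
    rcases mul_eq_zero.1 hsq with h | h
    · rw [hm]; field_simp; linear_combination h
    · exfalso
      have hw0 : w ≠ 0 := by intro h0; rw [h0] at hw; simp at hw
      have hwinv : w⁻¹ = (1 - y - z + s) / 2 := by
        have h4 : w⁻¹ = 1 - z - (y:ℂ) - y * z * w := inv_eq_of_mul_eq_one_right hq
        rw [h4]; linear_combination (-(1:ℂ)/2) * h
      have h5 : (w⁻¹).im = (-z.im + s.im) / 2 := by
        rw [hwinv]; simp [Complex.div_im, Complex.sub_im, Complex.ofReal_im]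
      have h6 : 0 < (w⁻¹).im := by rw [h5]; linarith
      have h7 := Complex.inv_im w
      have h8 : 0 < Complex.normSq w := Complex.normSq_pos.2 hw0
      rw [h7] at h6
      have h9 : 0 < -w.im := by
        rcases div_pos_iff.1 h6 with ⟨ha, _⟩ | ⟨_, hb⟩
        · exact ha
        · linarith
      linarith
end
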